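/- Let n = 4 and λ_1, λ_2, λ_3, λ_4 be the fourth roots of unity. In ℚ[H]/(H^4 − 1)[[q, 1/z]], for each d ≥ 1, the coefficient of q^d in the series ∑_{d≥0} q^d · (∏_{k=1}^{2d}(2H + kz) · ∏_{k=0}^{2d−1}(−2H − kz)) / (∏_{i=1}^{4} ∏_{k=1}^{d}(H − λ_i + kz)), expanded in powers of 1/z, has z^0-coefficient 0 in its H^0-component, and its z^{−1} H^1-component equals (1/d)·binom(2d,d)^2. -/

import Mathlib

open Finset

private lemma coeff_one_mul' {R : Type*} [CommRing R] (f g : PowerSeries R) :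
    PowerSeries.coeff (R := R) 1 (f*g) =
      PowerSeries.constantCoeff (R := R) f * PowerSeries.coeff (R := R) 1 g +
      PowerSeries.coeff (R := R) 1 f * PowerSeries.constantCoeff (R := R) g := by
  rw [PowerSeries.coeff_mul]
  rw [show (1:ℕ) = 0 + 1 from rfl, Finset.Nat.antidiagonal_succ]
  simp [Prod.map, add_comm]

private lemma prod_neg' {m : ℕ} (f : ℕ → Polynomial ℚ) :
    ∏ k ∈ range m, (-(f k)) = (-1)^m * ∏ k ∈ range m, f k := by
  induction m with
  | zero => simp
  | succ n ih => rw [prod_range_succ, prod_range_succ, ih, pow_succ]; ring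

/-- For the local Calabi–Yau `Tot(O(-2,-2)) → ℙ¹×ℙ¹`, with the equivariant
parameters specialized to the fourth roots of unity, the degree-`d ≥ 1` term of
the I-function is `N_d/D_d` with
`N_d = ∏_{k=1}^{2d}(2H + kz)·∏_{k=0}^{2d-1}(-2H - kz)` and
`D_d = ∏_{k=1}^{d}((H + kz)⁴ - 1)`.  Writing `w = 1/z`, this equals `Ñ_d/D̃_d`
with `Ñ_d(w) = ∏_{k=1}^{2d}(2Hw + k)·∏_{k=0}^{2d-1}(-2Hw - k)` and
`D̃_d(w) = ∏_{k=1}^{d}((Hw + k)⁴ - w⁴)`, a well-defined power series in `w` with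
polynomial coefficients in `H`.  Reducing the coefficients mod `H⁴ - 1`, the
`w⁰`-coefficient has vanishing `H⁰`-component, and the `w¹`-coefficient (the
`z^{-1}`-term) has `H¹`-component `(1/d)·binom(2d,d)²`. -/
theorem local_P1xP1_I_function_coeffs
    (H W : PowerSeries (Polynomial ℚ))
    (hH : H = PowerSeries.C (R := Polynomial ℚ) Polynomial.X)
    (hW : W = PowerSeries.X)
    (N D : ℕ → PowerSeries (Polynomial ℚ))
    (hN : ∀ d, N d =
      (∏ k ∈ Finset.range (2 * d), (2 * H * W + ((k : ℕ) + 1 : ℕ))) *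
      (∏ k ∈ Finset.range (2 * d), (-(2 * H * W) - (k : ℕ))))
    (hD : ∀ d, D d = ∏ k ∈ Finset.range d, ((H * W + ((k : ℕ) + 1 : ℕ)) ^ 4 - W ^ 4)) :
    ∀ d : ℕ, 1 ≤ d → ∀ F : PowerSeries (Polynomial ℚ), F * D d = N d →
      (((PowerSeries.coeff (R := Polynomial ℚ) 0 F) %ₘ
          (Polynomial.X ^ 4 - 1)).coeff 0 = 0) ∧
      (((PowerSeries.coeff (R := Polynomial ℚ) 1 F) %ₘ
          (Polynomial.X ^ 4 - 1)).coeff 1 = ((Nat.choose (2 * d) d : ℚ)) ^ 2 / d) := by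
  intro d hd F hF
  subst hH hW
  obtain ⟨m, hm⟩ : ∃ m, 2 * d = m + 1 := ⟨2 * d - 1, by omega⟩
  have hdfne : ((d.factorial : Polynomial ℚ))^4 ≠ 0 := by
    apply pow_ne_zero
    exact_mod_cast Nat.cast_ne_zero.mpr d.factorial_ne_zero
  -- constant coefficient of D d
  have hd0 : PowerSeries.constantCoeff (R := Polynomial ℚ) (D d) =
      ((d.factorial : Polynomial ℚ))^4 := by
    rw [hD, map_prod]
    simp only [map_sub, map_pow, map_add, map_mul, map_natCast,
      PowerSeries.constantCoeff_X, PowerSeries.constantCoeff_C, mul_zero, zero_pow,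
      add_zero, zero_add, sub_zero]
    norm_num
    rw [Finset.prod_pow]
    congr 1
    norm_cast
    exact Finset.prod_range_add_one_eq_factorial d
  -- constant coefficient of the second factor of N d is zero
  have hB0 : PowerSeries.constantCoeff (R := Polynomial ℚ)
      (∏ k ∈ Finset.range (2 * d),
        (-(2 * PowerSeries.C (R := Polynomial ℚ) Polynomial.X * PowerSeries.X) -
          (k : PowerSeries (Polynomial ℚ)))) = 0 := by
    rw [map_prod]
    apply Finset.prod_eq_zero (Finset.mem_range.mpr (by omega : 0 < 2 * d))
    simp
  -- constant coefficient of N d is zero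
  have hn0 : PowerSeries.constantCoeff (R := Polynomial ℚ) (N d) = 0 := by
    rw [hN, map_mul, hB0, mul_zero]
  -- coeff 0 of F vanishes
  have ha0 : PowerSeries.coeff (R := Polynomial ℚ) 0 F = 0 := by
    rw [PowerSeries.coeff_zero_eq_constantCoeff]
    have h := congrArg (PowerSeries.constantCoeff (R := Polynomial ℚ)) hF
    rw [map_mul, hd0, hn0] at h
    rcases mul_eq_zero.mp h with h' | h'
    · exact h'
    · exact absurd h' hdfne
  refine ⟨by simp [ha0], ?_⟩
  -- constant coefficient of the first factor of N d
  have hA0 : PowerSeries.constantCoeff (R := Polynomial ℚ)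
      (∏ k ∈ Finset.range (2 * d),
        (2 * PowerSeries.C (R := Polynomial ℚ) Polynomial.X * PowerSeries.X +
          ((k + 1 : ℕ) : PowerSeries (Polynomial ℚ)))) =
      (((2 * d).factorial : Polynomial ℚ)) := by
    rw [map_prod]
    simp only [map_add, map_mul, map_natCast, PowerSeries.constantCoeff_X,
      PowerSeries.constantCoeff_C, mul_zero, zero_add]
    norm_cast
    exact Finset.prod_range_add_one_eq_factorial (2 * d)
  -- coeff 1 of the second factor of N d
  have hB1 : PowerSeries.coeff (R := Polynomial ℚ) 1
      (∏ k ∈ Finset.range (2 * d),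
        (-(2 * PowerSeries.C (R := Polynomial ℚ) Polynomial.X * PowerSeries.X) -
          (k : PowerSeries (Polynomial ℚ)))) =
      Polynomial.C 2 * ((m.factorial : Polynomial ℚ)) * Polynomial.X := by
    rw [hm, Finset.prod_range_succ', coeff_one_mul']
    have hrest0 : PowerSeries.constantCoeff (R := Polynomial ℚ)
        (∏ k ∈ Finset.range m,
          (-(2 * PowerSeries.C (R := Polynomial ℚ) Polynomial.X * PowerSeries.X) -
            ((k + 1 : ℕ) : PowerSeries (Polynomial ℚ)))) =
        (-1)^m * (m.factorial : Polynomial ℚ) := by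
      rw [map_prod]
      simp only [map_sub, map_neg, map_mul, map_natCast, PowerSeries.constantCoeff_X,
        PowerSeries.constantCoeff_C, mul_zero, neg_zero, zero_sub]
      rw [prod_neg']
      congr 1
      norm_cast
      exact Finset.prod_range_add_one_eq_factorial m
    rw [hrest0]
    have hmodd : Odd m := ⟨d - 1, by omega⟩
    rw [hmodd.neg_one_pow]
    simp only [Nat.cast_zero, sub_zero]
    have hc1 : PowerSeries.coeff (R := Polynomial ℚ) 1
        (-(2 * PowerSeries.C (R := Polynomial ℚ) Polynomial.X * PowerSeries.X)) =
        -(2 * Polynomial.X) := by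
      simp [PowerSeries.coeff_C_mul, map_ofNat]
    have hc0 : PowerSeries.constantCoeff (R := Polynomial ℚ)
        (-(2 * PowerSeries.C (R := Polynomial ℚ) Polynomial.X * PowerSeries.X)) = 0 := by
      simp [map_ofNat]
    rw [hc1, hc0, mul_zero, add_zero]
    rw [show (Polynomial.C 2 : Polynomial ℚ) = 2 from by simp [map_ofNat]]
    ring
  -- coeff 1 of N d
  have hn1 : PowerSeries.coeff (R := Polynomial ℚ) 1 (N d) =
      (((2 * d).factorial : Polynomial ℚ)) *
        (Polynomial.C 2 * ((m.factorial : Polynomial ℚ)) * Polynomial.X) := by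
    rw [hN, coeff_one_mul', hA0, hB1, hB0, mul_zero, add_zero]
  -- the key equation
  have key : PowerSeries.coeff (R := Polynomial ℚ) 1 F * ((d.factorial : Polynomial ℚ))^4 =
      (((2 * d).factorial : Polynomial ℚ)) *
        (Polynomial.C 2 * ((m.factorial : Polynomial ℚ)) * Polynomial.X) := by
    have h := congrArg (PowerSeries.coeff (R := Polynomial ℚ) 1) hF
    rw [coeff_one_mul', ← PowerSeries.coeff_zero_eq_constantCoeff_apply, ha0, zero_mul,
      zero_add, hd0, hn1] at h
    exact h
  -- solve for a1
  set c : ℚ := 2 * ((2 * d).factorial : ℚ) * (m.factorial : ℚ) / ((d.factorial : ℚ))^4 with hc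
  have ha1 : PowerSeries.coeff (R := Polynomial ℚ) 1 F = Polynomial.C c * Polynomial.X := by
    have hCne : (Polynomial.C (((d.factorial : ℚ))^4) : Polynomial ℚ) ≠ 0 := by
      rw [Ne, Polynomial.C_eq_zero]
      positivity
    apply mul_right_cancel₀ hCne
    have hcast : (Polynomial.C (((d.factorial : ℚ))^4) : Polynomial ℚ) =
        ((d.factorial : Polynomial ℚ))^4 := by
      rw [map_pow, map_natCast]
    rw [hcast, key]
    have hcd : c * ((d.factorial : ℚ))^4 = 2 * ((2 * d).factorial : ℚ) * (m.factorial : ℚ) := by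
      rw [hc]
      field_simp
    calc (((2 * d).factorial : Polynomial ℚ)) *
          (Polynomial.C 2 * ((m.factorial : Polynomial ℚ)) * Polynomial.X)
        = Polynomial.C (2 * ((2 * d).factorial : ℚ) * (m.factorial : ℚ)) * Polynomial.X := by
          rw [Polynomial.C_mul, Polynomial.C_mul, map_natCast, map_natCast,
            show (Polynomial.C (2:ℚ) : Polynomial ℚ) = 2 from by simp [map_ofNat]]
          ring
      _ = Polynomial.C (c * ((d.factorial : ℚ))^4) * Polynomial.X := by rw [hcd]
      _ = Polynomial.C c * Polynomial.X * ((d.factorial : Polynomial ℚ))^4 := by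
          rw [Polynomial.C_mul, ← hcast]
          ring
  rw [ha1]
  have hmonic : (Polynomial.X ^ 4 - 1 : Polynomial ℚ).Monic := by
    have := Polynomial.monic_X_pow_sub_C (1 : ℚ) (by norm_num : (4:ℕ) ≠ 0)
    simpa using this
  have hdeg : (Polynomial.C c * Polynomial.X : Polynomial ℚ).degree <
      (Polynomial.X ^ 4 - 1 : Polynomial ℚ).degree := by
    have h4 : (Polynomial.X ^ 4 - 1 : Polynomial ℚ).degree = 4 := by
      have := Polynomial.degree_X_pow_sub_C (by norm_num : 0 < 4) (1 : ℚ)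
      simpa using this
    rw [h4]
    apply lt_of_le_of_lt (Polynomial.degree_mul_le _ _)
    calc (Polynomial.C c).degree + (Polynomial.X : Polynomial ℚ).degree
        ≤ 0 + 1 := by
          rw [Polynomial.degree_X]
          exact add_le_add_left (Polynomial.degree_C_le (a := c)) 1
      _ < 4 := by norm_num
  rw [(Polynomial.modByMonic_eq_self_iff hmonic).mpr hdeg]
  rw [Polynomial.coeff_C_mul, Polynomial.coeff_X_one, mul_one]
  -- final arithmetic
  have hdq : (d : ℚ) ≠ 0 := by positivity
  have hfq : ((d.factorial : ℚ)) ≠ 0 := by exact_mod_cast d.factorial_ne_zero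
  have h2d : ((2 * d).factorial : ℚ) = 2 * d * (m.factorial : ℚ) := by
    have h : (2 * d).factorial = 2 * d * m.factorial := by
      rw [hm, Nat.factorial_succ, ← hm]
    exact_mod_cast h
  have hch : ((2 * d).choose d : ℚ) * (d.factorial : ℚ) * (d.factorial : ℚ) =
      ((2 * d).factorial : ℚ) := by
    have h := Nat.choose_mul_factorial_mul_factorial (by omega : d ≤ 2 * d)
    have h' : 2 * d - d = d := by omega
    rw [h'] at h
    exact_mod_cast h
  rw [hc]
  rw [div_eq_div_iff (by positivity) hdq]
  linear_combination (-(((2 * d).factorial : ℚ))) * h2d -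
    (((2 * d).factorial : ℚ) + ((2 * d).choose d : ℚ) * ((d.factorial : ℚ))^2) * hch
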